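/- Every n×n complex matrix of rank n−1 can be written as P·T₁·T₂ where P is invertible and T₁, T₂ are Toeplitz matrices. -/

import Mathlib

open Polynomial Matrix Finset LinearMap Submodule Module

def IsToeplitz {n : ℕ} (M : Matrix (Fin n) (Fin n) ℂ) : Prop :=
  ∀ (i j : Fin n) (hi : (i : ℕ) + 1 < n) (hj : (j : ℕ) + 1 < n),
    M i j = M ⟨i + 1, hi⟩ ⟨j + 1, hj⟩

noncomputable def Tone (n k : ℕ) : Matrix (Fin n) (Fin n) ℂ :=
  Matrix.of fun i j =>
    if (j : ℕ) = (i : ℕ) + (k + 1) ∨ (i : ℕ) = (j : ℕ) + (n - k) then 1 else 0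

lemma isToeplitz_Tone (n k : ℕ) : IsToeplitz (Tone n k) := by
  intro i j hi hj
  simp only [Tone, Matrix.of_apply]
  congr 1
  refine propext ?_
  constructor <;> (intro h; omega)

lemma Tone_col (n k : ℕ) (hk : k < n) (i : Fin n) : Tone n k i ⟨k, hk⟩ = 0 := by
  simp only [Tone, Matrix.of_apply]
  rw [if_neg]
  have := i.2
  simp only [not_or]
  omega

lemma Tone_mulVec_eq_zero {n k : ℕ} (hk : k < n) (y : Fin n → ℂ)
    (h : (Tone n k).mulVec y = 0) : ∀ j : Fin n, (j : ℕ) ≠ k → y j = 0 := by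
  intro j hj
  rcases lt_or_gt_of_ne hj with hjk | hjk
  · -- j < k, use row i = j + (n - k)
    have hi : (j : ℕ) + (n - k) < n := by omega
    have h0 := congrFun h ⟨(j : ℕ) + (n - k), hi⟩
    simp only [Matrix.mulVec, dotProduct, Pi.zero_apply] at h0
    rw [Finset.sum_eq_single j] at h0
    · simpa [Tone, show ((j:ℕ) + (n - k) = (j:ℕ) + (n - k) ∨ True) from Or.inr trivial] using h0
    · intro b _ hb
      simp only [Tone, Matrix.of_apply]
      rw [if_neg, zero_mul]
      have hb2 := b.2
      simp only [not_or]
      constructor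
      · omega
      · intro hcon
        exact hb (Fin.ext (by omega))
    · intro hmem; exact absurd (Finset.mem_univ _) hmem
  · -- j > k, use row i = j - (k+1)
    have hi : (j : ℕ) - (k + 1) < n := by omega
    have h0 := congrFun h ⟨(j : ℕ) - (k + 1), hi⟩
    simp only [Matrix.mulVec, dotProduct, Pi.zero_apply] at h0
    rw [Finset.sum_eq_single j] at h0
    · rw [show Tone n k ⟨(j : ℕ) - (k + 1), hi⟩ j = 1 from ?_, one_mul] at h0
      · exact h0
      · simp only [Tone, Matrix.of_apply]
        rw [if_pos (Or.inl (by omega))]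
    · intro b _ hb
      simp only [Tone, Matrix.of_apply]
      rw [if_neg, zero_mul]
      have hb2 := b.2
      simp only [not_or]
      constructor
      · intro hcon
        exact hb (Fin.ext (by omega))
      · omega
    · intro hmem; exact absurd (Finset.mem_univ _) hmem

noncomputable def Sm (n : ℕ) : Matrix (Fin n) (Fin n) ℂ :=
  Matrix.of fun i j => if (i : ℕ) = (j : ℕ) + 1 then 1 else 0

lemma Sm_pow_apply {n : ℕ} (m : ℕ) (i j : Fin n) :
    ((Sm n) ^ m) i j = if (i : ℕ) = (j : ℕ) + m then 1 else 0 := by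
  induction m generalizing i j with
  | zero =>
    simp only [pow_zero, Matrix.one_apply, Nat.add_zero]
    congr 1
    simp [Fin.ext_iff, eq_comm]
  | succ m ih =>
    rw [pow_succ, Matrix.mul_apply]
    by_cases h : (j : ℕ) + 1 < n
    · rw [Finset.sum_eq_single (⟨(j : ℕ) + 1, h⟩ : Fin n)]
      · rw [ih]
        simp only [Sm, Matrix.of_apply]
        simp only [if_true, mul_one]
        congr 1
        refine propext ?_
        omega
      · intro b _ hb
        simp only [Sm, Matrix.of_apply]
        rw [if_neg, mul_zero]
        intro hb'
        exact hb (by simp [Fin.ext_iff, hb'])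
      · intro hmem; exact absurd (Finset.mem_univ _) hmem
    · rw [Finset.sum_eq_zero, if_neg (by omega)]
      intro b _
      simp only [Sm, Matrix.of_apply]
      rw [if_neg (by omega), mul_zero]

lemma Sm_pow_n {n : ℕ} : (Sm n) ^ n = 0 := by
  ext i j
  rw [Sm_pow_apply]
  simp only [Matrix.zero_apply]
  rw [if_neg (by omega)]

lemma aeval_Sm_apply {n : ℕ} (p : ℂ[X]) (i j : Fin n) :
    (Polynomial.aeval (Sm n) p) i j =
      if (j : ℕ) ≤ (i : ℕ) then p.coeff ((i : ℕ) - (j : ℕ)) else 0 := by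
  rw [Polynomial.aeval_eq_sum_range, Matrix.sum_apply]
  have : ∀ m ∈ Finset.range (p.natDegree + 1),
      (p.coeff m • (Sm n) ^ m) i j = if (i : ℕ) = (j : ℕ) + m then p.coeff m else 0 := by
    intro m _
    rw [Matrix.smul_apply, Sm_pow_apply]
    split <;> simp
  rw [Finset.sum_congr rfl this]
  by_cases hji : (j : ℕ) ≤ (i : ℕ)
  · rw [if_pos hji]
    have : ∀ m ∈ Finset.range (p.natDegree + 1),
        (if (i : ℕ) = (j : ℕ) + m then p.coeff m else 0) =
          if m = (i : ℕ) - (j : ℕ) then p.coeff m else 0 := by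
      intro m _
      congr 1
      refine propext ?_
      omega
    rw [Finset.sum_congr rfl this, Finset.sum_ite_eq' (Finset.range (p.natDegree + 1))]
    split
    · rfl
    · next hmem =>
      rw [Polynomial.coeff_eq_zero_of_natDegree_lt]
      simp only [Finset.mem_range] at hmem
      omega
  · rw [if_neg hji, Finset.sum_eq_zero]
    intro m _
    rw [if_neg (by omega)]

lemma isToeplitz_aeval_Sm {n : ℕ} (p : ℂ[X]) : IsToeplitz (Polynomial.aeval (Sm n) p) := by
  intro i j hi hj
  rw [aeval_Sm_apply, aeval_Sm_apply]
  have h1 : ((j : ℕ) ≤ (i : ℕ)) = ((j : ℕ) + 1 ≤ (i : ℕ) + 1) := by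
    refine propext ?_; omega
  have h2 : (i : ℕ) - (j : ℕ) = (i : ℕ) + 1 - ((j : ℕ) + 1) := by omega
  simp only [h1, h2]

lemma exists_equiv_comp {n : ℕ} (f g : (Fin n → ℂ) →ₗ[ℂ] (Fin n → ℂ))
    (h : LinearMap.ker f = LinearMap.ker g) :
    ∃ e : (Fin n → ℂ) ≃ₗ[ℂ] (Fin n → ℂ), ∀ x, f x = e (g x) := by
  let φ : LinearMap.range g ≃ₗ[ℂ] LinearMap.range f :=
    (g.quotKerEquivRange.symm.trans (Submodule.quotEquivOfEq _ _ h.symm)).trans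
      f.quotKerEquivRange
  have hφ : ∀ x : Fin n → ℂ, (φ ⟨g x, LinearMap.mem_range_self g x⟩ : Fin n → ℂ) = f x := by
    intro x
    have h1 : g.quotKerEquivRange (Submodule.Quotient.mk x) = ⟨g x, LinearMap.mem_range_self g x⟩ :=
      Subtype.ext (g.quotKerEquivRange_apply_mk x)
    have : φ ⟨g x, LinearMap.mem_range_self g x⟩ =
        f.quotKerEquivRange ((Submodule.quotEquivOfEq _ _ h.symm)
          (g.quotKerEquivRange.symm ⟨g x, LinearMap.mem_range_self g x⟩)) := rfl
    rw [this, ← h1, LinearEquiv.symm_apply_apply]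
    rw [Submodule.quotEquivOfEq_mk, f.quotKerEquivRange_apply_mk]
  obtain ⟨U, hU⟩ := Submodule.exists_isCompl (LinearMap.range g)
  obtain ⟨W, hW⟩ := Submodule.exists_isCompl (LinearMap.range f)
  have hdim : finrank ℂ U = finrank ℂ W := by
    have h1 := Submodule.finrank_add_eq_of_isCompl hU
    have h2 := Submodule.finrank_add_eq_of_isCompl hW
    have h3 : finrank ℂ (LinearMap.range g) = finrank ℂ (LinearMap.range f) :=
      φ.finrank_eq
    omega
  obtain ⟨ψ⟩ := FiniteDimensional.nonempty_linearEquiv_of_finrank_eq hdim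
  refine ⟨(Submodule.prodEquivOfIsCompl _ _ hU).symm.trans ((φ.prodCongr ψ).trans
    (Submodule.prodEquivOfIsCompl _ _ hW)), fun x => ?_⟩
  set gx : LinearMap.range g := ⟨g x, LinearMap.mem_range_self g x⟩ with hgx
  have h2 : (Submodule.prodEquivOfIsCompl _ _ hU).symm (g x) = (gx, 0) :=
    Submodule.prodEquivOfIsCompl_symm_apply_left _ _ hU gx
  simp only [LinearEquiv.trans_apply, h2, LinearEquiv.prodCongr_apply]
  simp [hφ x]
  exact (hφ x).symm

theorem rank_n_sub_one_factorization {n : ℕ} (M : Matrix (Fin n) (Fin n) ℂ)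
    (hM : M.rank = n - 1) :
    ∃ P T₁ T₂ : Matrix (Fin n) (Fin n) ℂ,
      IsUnit P ∧ IsToeplitz T₁ ∧ IsToeplitz T₂ ∧ M = P * T₁ * T₂ := by
  rcases Nat.eq_zero_or_pos n with hn | hn
  · subst hn
    refine ⟨1, 1, 1, isUnit_one, ?_, ?_, ?_⟩
    · intro i j hi hj; omega
    · intro i j hi hj; omega
    · ext i j; exact i.elim0
  -- main case
  set f := M.mulVecLin with hf
  have hrank : finrank ℂ (LinearMap.range f) = n - 1 := hM
  have hker : finrank ℂ (LinearMap.ker f) = 1 := by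
    have h1 := LinearMap.finrank_range_add_finrank_ker f
    rw [Module.finrank_fin_fun] at h1
    omega
  have hbot : LinearMap.ker f ≠ ⊥ := by
    intro hb
    rw [hb, finrank_bot] at hker
    omega
  obtain ⟨v, hv_mem, hv0⟩ := (Submodule.ne_bot_iff _).mp hbot
  have hspan : Submodule.span ℂ {v} = LinearMap.ker f := by
    apply Submodule.eq_of_le_of_finrank_eq
    · rw [Submodule.span_le, Set.singleton_subset_iff]
      exact hv_mem
    · rw [finrank_span_singleton hv0, hker]
  -- the least nonzero coordinate of v
  set v' : ℕ → ℂ := fun m => if h : m < n then v ⟨m, h⟩ else 0 with hv'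
  have hex : ∃ m, v' m ≠ 0 := by
    have : ∃ i : Fin n, v i ≠ 0 := by
      by_contra hcon
      push_neg at hcon
      exact hv0 (funext hcon)
    obtain ⟨i, hi⟩ := this
    exact ⟨i, by simpa [hv', i.2] using hi⟩
  set k := Nat.find hex with hkdef
  have hvk : v' k ≠ 0 := Nat.find_spec hex
  have hmin : ∀ m, m < k → v' m = 0 := by
    intro m hm
    by_contra hcon
    exact absurd (Nat.find_le hcon : k ≤ m) (by omega)
  have hk : k < n := by
    by_contra hcon
    exact hvk (dif_neg (by omega))
  set kf : Fin n := ⟨k, hk⟩ with hkf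
  -- the polynomial q with q(S) e_k = v
  set q : ℂ[X] := ∑ m ∈ Finset.range n, Polynomial.C (v' (k + m)) * Polynomial.X ^ m with hq
  have hcoeff : ∀ m, q.coeff m = if m < n then v' (k + m) else 0 := by
    intro m
    rw [hq, Polynomial.finset_sum_coeff]
    have : ∀ i ∈ Finset.range n,
        (Polynomial.C (v' (k + i)) * Polynomial.X ^ i).coeff m =
          if i = m then v' (k + i) else 0 := by
      intro i _
      rw [Polynomial.coeff_C_mul, Polynomial.coeff_X_pow]
      split
      · next hh => rw [if_pos hh.symm, mul_one]
      · next hh => rw [if_neg (fun hh2 => hh hh2.symm), mul_zero]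
    rw [Finset.sum_congr rfl this, Finset.sum_ite_eq' (Finset.range n)]
    simp only [Finset.mem_range]
  set A := Polynomial.aeval (Sm n) q with hA
  have hAek : A.mulVec (Pi.single kf 1) = v := by
    funext i
    have h0 : A.mulVec (Pi.single kf 1) i = A i kf := by
      simp [Matrix.mulVec_single]
    rw [h0, hA, aeval_Sm_apply]
    by_cases hki : k ≤ (i : ℕ)
    · rw [if_pos hki, hcoeff, if_pos (by omega), show k + ((i : ℕ) - k) = (i : ℕ) by omega]
      simp [hv', i.2]
    · rw [if_neg hki]
      have := hmin i (by omega)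
      simp only [hv', dif_pos i.2] at this
      simp [this]
  set c : ℂ := v' k with hc'
  have hc : c ≠ 0 := hvk
  have hq0 : q.coeff 0 = c := by rw [hcoeff, if_pos hn, Nat.add_zero]
  set px : ℂ[X] := Polynomial.C (-c⁻¹) * (Polynomial.X * q.divX) with hpx
  set pT : ℂ[X] := Polynomial.C c⁻¹ * ∑ i ∈ Finset.range n, px ^ i with hpT
  have hqfact : q = Polynomial.C c * (1 - px) := by
    have hX : Polynomial.X * q.divX + Polynomial.C (q.coeff 0) = q := q.X_mul_divX_add
    rw [hq0] at hX
    have hcc' : Polynomial.C c * Polynomial.C (-c⁻¹) = -1 := by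
      rw [← Polynomial.C_mul, mul_neg, mul_inv_cancel₀ hc]
      simp
    rw [hpx]
    linear_combination -hX + (Polynomial.X * q.divX) * hcc'
  have hgeo : q * pT = 1 - px ^ n := by
    have hgs := geom_sum_mul px n
    calc q * pT = (Polynomial.C c * Polynomial.C c⁻¹) *
          ((1 - px) * ∑ i ∈ Finset.range n, px ^ i) := by rw [hqfact, hpT]; ring
      _ = 1 * ((1 - px) * ∑ i ∈ Finset.range n, px ^ i) := by
          rw [← Polynomial.C_mul, mul_inv_cancel₀ hc, Polynomial.C_1]
      _ = 1 - px ^ n := by rw [one_mul]; linear_combination -hgs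
  set T₂ : Matrix (Fin n) (Fin n) ℂ := Polynomial.aeval (Sm n) pT with hT₂
  have hpxn : (Polynomial.aeval (Sm n) px) ^ n = (0 : Matrix (Fin n) (Fin n) ℂ) := by
    rw [← _root_.map_pow]
    rw [show px ^ n = Polynomial.X ^ n * (Polynomial.C (-c⁻¹) ^ n * q.divX ^ n) by
      rw [hpx]; ring]
    rw [_root_.map_mul, _root_.map_pow, Polynomial.aeval_X, Sm_pow_n, zero_mul]
  have hAT : A * T₂ = 1 := by
    rw [hA, hT₂, ← _root_.map_mul, hgeo, map_sub, _root_.map_one, _root_.map_pow, hpxn]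
    exact sub_zero 1
  have hTA : T₂ * A = 1 := by
    rw [hA, hT₂, ← _root_.map_mul, mul_comm pT q, hgeo, map_sub, _root_.map_one, _root_.map_pow, hpxn]
    exact sub_zero 1
  set N : Matrix (Fin n) (Fin n) ℂ := Tone n k * T₂ with hN
  have hT2v : T₂.mulVec v = Pi.single kf 1 := by
    rw [← hAek, Matrix.mulVec_mulVec, hTA, Matrix.one_mulVec]
  have hNv : N.mulVec v = 0 := by
    rw [hN, ← Matrix.mulVec_mulVec, hT2v]
    funext i
    have h0 : (Tone n k).mulVec (Pi.single kf 1) i = Tone n k i kf := by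
      simp [Matrix.mulVec_single]
    rw [h0, Tone_col n k hk]
    rfl
  have hkerN : LinearMap.ker (N.mulVecLin) = Submodule.span ℂ {v} := by
    ext x
    simp only [LinearMap.mem_ker, Matrix.mulVecLin_apply]
    constructor
    · intro hx
      rw [hN, ← Matrix.mulVec_mulVec] at hx
      set y := T₂.mulVec x with hy
      have hyz := Tone_mulVec_eq_zero hk y hx
      have hyform : y = y kf • (Pi.single kf 1 : Fin n → ℂ) := by
        funext j
        by_cases hj : j = kf
        · subst hj; simp
        · rw [hyz j (fun hcon => hj (Fin.ext hcon))]
          simp [Pi.single_apply, hj]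
      have hx2 : x = A.mulVec y := by
        rw [hy, Matrix.mulVec_mulVec, hAT, Matrix.one_mulVec]
      rw [hx2, hyform, Matrix.mulVec_smul, hAek]
      exact Submodule.smul_mem _ _ (Submodule.mem_span_singleton_self v)
    · intro hx
      obtain ⟨a, ha⟩ := Submodule.mem_span_singleton.mp hx
      rw [← ha, Matrix.mulVec_smul, hNv, smul_zero]
  obtain ⟨e, he⟩ := exists_equiv_comp f (N.mulVecLin) (by rw [hkerN, hspan])
  set P : Matrix (Fin n) (Fin n) ℂ := LinearMap.toMatrix' e.toLinearMap with hP
  have hPunit : IsUnit P := by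
    rw [isUnit_iff_exists]
    refine ⟨LinearMap.toMatrix' e.symm.toLinearMap, ?_, ?_⟩
    · rw [hP, ← LinearMap.toMatrix'_comp]
      rw [show e.toLinearMap ∘ₗ e.symm.toLinearMap = LinearMap.id from
        LinearMap.ext fun x => by simp]
      exact LinearMap.toMatrix'_id
    · rw [hP, ← LinearMap.toMatrix'_comp]
      rw [show e.symm.toLinearMap ∘ₗ e.toLinearMap = LinearMap.id from
        LinearMap.ext fun x => by simp]
      exact LinearMap.toMatrix'_id
  have hMPN : M = P * N := by
    have hcomp : f = e.toLinearMap ∘ₗ N.mulVecLin := by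
      refine LinearMap.ext fun x => ?_
      simp only [LinearMap.coe_comp, Function.comp_apply, LinearEquiv.coe_coe]
      exact he x
    have h1 : LinearMap.toMatrix' f = M := by
      rw [hf, ← Matrix.toLin'_apply', LinearMap.toMatrix'_toLin']
    have h2 : LinearMap.toMatrix' (N.mulVecLin) = N := by
      rw [← Matrix.toLin'_apply', LinearMap.toMatrix'_toLin']
    rw [← h1, hcomp, LinearMap.toMatrix'_comp, h2, hP]
  exact ⟨P, Tone n k, T₂, hPunit, isToeplitz_Tone n k, isToeplitz_aeval_Sm pT,
    by rw [mul_assoc]; exact hMPN⟩
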